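/- arXiv:2411.17635 — 2 statements merged into one kernel-verified Lean document; each statement's English description precedes it below -/
import Mathlib

section
/- Let H : ℝ^{3×3} → ℝ satisfy 0 ≤ H(A) ≤ (1/8)|A|⁴ for all A. If λ, μ ∈ ℝ^{3×3} satisfy |λ| ≤ (3/8) |μ|^{2/3}, then g_H(λ, μ) ≥ (1/16) ( |μ|^{4/3} + |λ|² ). In particular, a suitable witness is A = μ |μ|^{−2/3} (and A = 0 when μ = 0). -/
open scoped BigOperators

noncomputable section

/-- `3 × 3` real matrices, as functions of (row, column). -/
abbrev M33 := Fin 3 → Fin 3 → ℝ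

/-- The Levi-Civita symbol on indices in `Fin 3`. -/
def eps (i j k : Fin 3) : ℝ :=
  ((i.val : ℝ) - j.val) * ((j.val : ℝ) - k.val) * ((k.val : ℝ) - i.val) / 2

/-- The contraction `X : Y = Σ_{i,j} X_{ij} Y_{ij}`. -/
def dotM (X Y : M33) : ℝ := ∑ i, ∑ j, X i j * Y i j

/-- `T(A)_{Zp} = ε_{pqr} ε_{ZBC} A_{Bq} A_{Cr}`. -/
def Tmap (A : M33) : M33 :=
  fun Z p => ∑ q, ∑ r, ∑ B, ∑ C, eps p q r * eps Z B C * A B q * A C r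

/-- The Frobenius norm on `M33`. -/
def fnorm (A : M33) : ℝ := Real.sqrt (∑ i, ∑ j, (A i j) ^ 2)

/-- `g_H(λ, μ) = sup_{A} ( A:μ + λ:T(A) − H(A) )`, valued in `ℝ ∪ {±∞}` (the
supremum is never `-∞` since `H` is real-valued). -/
def gH (H : M33 → ℝ) (lam mu : M33) : EReal :=
  ⨆ A : M33, ((dotM A mu + dotM lam (Tmap A) - H A : ℝ) : EReal)


@[simp] lemma eps000 : eps 0 0 0 = 0 := by norm_num [eps, Fin.val_zero, Fin.val_one, Fin.val_two]
@[simp] lemma eps001 : eps 0 0 1 = 0 := by norm_num [eps, Fin.val_zero, Fin.val_one, Fin.val_two]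
@[simp] lemma eps002 : eps 0 0 2 = 0 := by norm_num [eps, Fin.val_zero, Fin.val_one, Fin.val_two]
@[simp] lemma eps010 : eps 0 1 0 = 0 := by norm_num [eps, Fin.val_zero, Fin.val_one, Fin.val_two]
@[simp] lemma eps011 : eps 0 1 1 = 0 := by norm_num [eps, Fin.val_zero, Fin.val_one, Fin.val_two]
@[simp] lemma eps012 : eps 0 1 2 = 1 := by norm_num [eps, Fin.val_zero, Fin.val_one, Fin.val_two]
@[simp] lemma eps020 : eps 0 2 0 = 0 := by norm_num [eps, Fin.val_zero, Fin.val_one, Fin.val_two]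
@[simp] lemma eps021 : eps 0 2 1 = -1 := by norm_num [eps, Fin.val_zero, Fin.val_one, Fin.val_two]
@[simp] lemma eps022 : eps 0 2 2 = 0 := by norm_num [eps, Fin.val_zero, Fin.val_one, Fin.val_two]
@[simp] lemma eps100 : eps 1 0 0 = 0 := by norm_num [eps, Fin.val_zero, Fin.val_one, Fin.val_two]
@[simp] lemma eps101 : eps 1 0 1 = 0 := by norm_num [eps, Fin.val_zero, Fin.val_one, Fin.val_two]
@[simp] lemma eps102 : eps 1 0 2 = -1 := by norm_num [eps, Fin.val_zero, Fin.val_one, Fin.val_two]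
@[simp] lemma eps110 : eps 1 1 0 = 0 := by norm_num [eps, Fin.val_zero, Fin.val_one, Fin.val_two]
@[simp] lemma eps111 : eps 1 1 1 = 0 := by norm_num [eps, Fin.val_zero, Fin.val_one, Fin.val_two]
@[simp] lemma eps112 : eps 1 1 2 = 0 := by norm_num [eps, Fin.val_zero, Fin.val_one, Fin.val_two]
@[simp] lemma eps120 : eps 1 2 0 = 1 := by norm_num [eps, Fin.val_zero, Fin.val_one, Fin.val_two]
@[simp] lemma eps121 : eps 1 2 1 = 0 := by norm_num [eps, Fin.val_zero, Fin.val_one, Fin.val_two]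
@[simp] lemma eps122 : eps 1 2 2 = 0 := by norm_num [eps, Fin.val_zero, Fin.val_one, Fin.val_two]
@[simp] lemma eps200 : eps 2 0 0 = 0 := by norm_num [eps, Fin.val_zero, Fin.val_one, Fin.val_two]
@[simp] lemma eps201 : eps 2 0 1 = 1 := by norm_num [eps, Fin.val_zero, Fin.val_one, Fin.val_two]
@[simp] lemma eps202 : eps 2 0 2 = 0 := by norm_num [eps, Fin.val_zero, Fin.val_one, Fin.val_two]
@[simp] lemma eps210 : eps 2 1 0 = -1 := by norm_num [eps, Fin.val_zero, Fin.val_one, Fin.val_two]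
@[simp] lemma eps211 : eps 2 1 1 = 0 := by norm_num [eps, Fin.val_zero, Fin.val_one, Fin.val_two]
@[simp] lemma eps212 : eps 2 1 2 = 0 := by norm_num [eps, Fin.val_zero, Fin.val_one, Fin.val_two]
@[simp] lemma eps220 : eps 2 2 0 = 0 := by norm_num [eps, Fin.val_zero, Fin.val_one, Fin.val_two]
@[simp] lemma eps221 : eps 2 2 1 = 0 := by norm_num [eps, Fin.val_zero, Fin.val_one, Fin.val_two]
@[simp] lemma eps222 : eps 2 2 2 = 0 := by norm_num [eps, Fin.val_zero, Fin.val_one, Fin.val_two]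

lemma Tmap_smul (mu : M33) (t : ℝ) (Z p : Fin 3) :
    Tmap (fun i j => mu i j * t) Z p = t^2 * Tmap mu Z p := by
  simp only [Tmap, Finset.mul_sum]
  exact Finset.sum_congr rfl fun q _ => Finset.sum_congr rfl fun r _ =>
    Finset.sum_congr rfl fun B _ => Finset.sum_congr rfl fun C _ => by ring


set_option maxHeartbeats 2000000 in
lemma T_sq_bound (A : M33) :
    (∑ i, ∑ j, (Tmap A i j)^2) ≤ 4 * (∑ i, ∑ j, (A i j)^2)^2 := by
  have key : 4 * (∑ i, ∑ j, (A i j)^2)^2 - (∑ i, ∑ j, (Tmap A i j)^2) =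
      4 * ((A 0 0^2 + A 0 1^2 + A 0 2^2)^2 + (A 1 0^2 + A 1 1^2 + A 1 2^2)^2
        + (A 2 0^2 + A 2 1^2 + A 2 2^2)^2
        + (A 0 0^2 + A 0 1^2 + A 0 2^2) * (A 1 0^2 + A 1 1^2 + A 1 2^2)
        + (A 0 0^2 + A 0 1^2 + A 0 2^2) * (A 2 0^2 + A 2 1^2 + A 2 2^2)
        + (A 1 0^2 + A 1 1^2 + A 1 2^2) * (A 2 0^2 + A 2 1^2 + A 2 2^2)
        + (A 0 0 * A 1 0 + A 0 1 * A 1 1 + A 0 2 * A 1 2)^2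
        + (A 0 0 * A 2 0 + A 0 1 * A 2 1 + A 0 2 * A 2 2)^2
        + (A 1 0 * A 2 0 + A 1 1 * A 2 1 + A 1 2 * A 2 2)^2) := by
    simp only [Tmap, Fin.sum_univ_three, eps000, eps001, eps002, eps010, eps011, eps012,
      eps020, eps021, eps022, eps100, eps101, eps102, eps110, eps111, eps112, eps120,
      eps121, eps122, eps200, eps201, eps202, eps210, eps211, eps212, eps220, eps221,
      eps222, zero_mul, mul_zero, one_mul, neg_mul, mul_one, zero_add, add_zero, mul_neg, neg_neg]
    ring
  nlinarith [key, sq_nonneg (A 0 0^2 + A 0 1^2 + A 0 2^2), sq_nonneg (A 1 0^2 + A 1 1^2 + A 1 2^2),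
    sq_nonneg (A 2 0^2 + A 2 1^2 + A 2 2^2),
    sq_nonneg (A 0 0 * A 1 0 + A 0 1 * A 1 1 + A 0 2 * A 1 2),
    sq_nonneg (A 0 0 * A 2 0 + A 0 1 * A 2 1 + A 0 2 * A 2 2),
    sq_nonneg (A 1 0 * A 2 0 + A 1 1 * A 2 1 + A 1 2 * A 2 2),
    mul_nonneg (by positivity : (0:ℝ) ≤ A 0 0^2 + A 0 1^2 + A 0 2^2) (by positivity : (0:ℝ) ≤ A 1 0^2 + A 1 1^2 + A 1 2^2),
    mul_nonneg (by positivity : (0:ℝ) ≤ A 0 0^2 + A 0 1^2 + A 0 2^2) (by positivity : (0:ℝ) ≤ A 2 0^2 + A 2 1^2 + A 2 2^2),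
    mul_nonneg (by positivity : (0:ℝ) ≤ A 1 0^2 + A 1 1^2 + A 1 2^2) (by positivity : (0:ℝ) ≤ A 2 0^2 + A 2 1^2 + A 2 2^2)]

lemma cs (X Y : M33) : (dotM X Y)^2 ≤ (∑ i, ∑ j, (X i j)^2) * (∑ i, ∑ j, (Y i j)^2) := by
  have := Finset.sum_mul_sq_le_sq_mul_sq Finset.univ
    (fun p : Fin 3 × Fin 3 => X p.1 p.2) (fun p => Y p.1 p.2)
  simpa [dotM, Fintype.sum_prod_type] using this

lemma dot_T_lower (lam mu : M33) :
    -(2 * fnorm lam * (∑ i, ∑ j, (mu i j)^2)) ≤ dotM lam (Tmap mu) := by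
  have hS : (0:ℝ) ≤ ∑ i, ∑ j, (lam i j)^2 := by positivity
  have hm2 : (0:ℝ) ≤ ∑ i, ∑ j, (mu i j)^2 := by positivity
  have hL2 : fnorm lam ^ 2 = ∑ i, ∑ j, (lam i j)^2 := Real.sq_sqrt hS
  have hL0 : 0 ≤ fnorm lam := Real.sqrt_nonneg _
  have h1 := cs lam (Tmap mu)
  have h2 := T_sq_bound mu
  have h3 : (dotM lam (Tmap mu))^2 ≤ (2 * fnorm lam * (∑ i, ∑ j, (mu i j)^2))^2 := by
    calc (dotM lam (Tmap mu))^2 ≤ (∑ i, ∑ j, (lam i j)^2) * (∑ i, ∑ j, (Tmap mu i j)^2) := h1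
      _ ≤ (∑ i, ∑ j, (lam i j)^2) * (4 * (∑ i, ∑ j, (mu i j)^2)^2) :=
          mul_le_mul_of_nonneg_left h2 hS
      _ = (2 * fnorm lam * (∑ i, ∑ j, (mu i j)^2))^2 := by rw [← hL2]; ring
  have hB : 0 ≤ 2 * fnorm lam * (∑ i, ∑ j, (mu i j)^2) := by positivity
  exact (abs_le_of_sq_le_sq' h3 hB).1

lemma witness_bound (lam mu : M33) (hsmall : fnorm lam ≤ (3 / 8) * fnorm mu ^ ((2 : ℝ) / 3))
    (H : M33 → ℝ) (hH1 : ∀ A, H A ≤ (1 / 8) * fnorm A ^ 4) :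
    (1 / 16) * (fnorm mu ^ ((4 : ℝ) / 3) + fnorm lam ^ 2) ≤
      dotM (fun i j => mu i j * fnorm mu ^ (-(2 : ℝ) / 3)) mu
        + dotM lam (Tmap (fun i j => mu i j * fnorm mu ^ (-(2 : ℝ) / 3)))
        - H (fun i j => mu i j * fnorm mu ^ (-(2 : ℝ) / 3)) := by
  have hm2 : (0:ℝ) ≤ ∑ i, ∑ j, (mu i j)^2 := by positivity
  have hF0 : 0 ≤ fnorm mu := Real.sqrt_nonneg _
  have hF2 : fnorm mu ^ 2 = ∑ i, ∑ j, (mu i j)^2 := Real.sq_sqrt hm2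
  have hL0 : 0 ≤ fnorm lam := Real.sqrt_nonneg _
  by_cases hmu0 : fnorm mu = 0
  · have h23 : ((2:ℝ)/3) ≠ 0 := by norm_num
    have hlam0 : fnorm lam = 0 := by
      refine le_antisymm ?_ hL0
      rw [hmu0, Real.zero_rpow h23] at hsmall; linarith
    have ht0 : fnorm mu ^ (-(2:ℝ)/3) = 0 := by
      rw [hmu0]; exact Real.zero_rpow (by norm_num)
    have hA0 : (fun i j => mu i j * fnorm mu ^ (-(2:ℝ)/3)) = (fun _ _ => (0:ℝ)) := by
      funext i j; rw [ht0, mul_zero]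
    have hfz : fnorm (fun _ _ => (0:ℝ)) = 0 := by simp [fnorm]
    have hHz : H (fun _ _ => (0:ℝ)) ≤ 0 := by
      have := hH1 (fun _ _ => (0:ℝ)); rw [hfz] at this; linarith
    rw [hA0, hmu0, hlam0, Real.zero_rpow (by norm_num : ((4:ℝ)/3) ≠ 0)]
    have hd1 : dotM (fun _ _ => (0:ℝ)) mu = 0 := by simp [dotM]
    have hd2 : dotM lam (Tmap (fun _ _ => (0:ℝ))) = 0 := by simp [dotM, Tmap]
    rw [hd1, hd2]; linarith
  · have hFpos : 0 < fnorm mu := lt_of_le_of_ne hF0 (Ne.symm hmu0)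
    set t : ℝ := fnorm mu ^ (-(2:ℝ)/3) with htdef
    have htpos : 0 < t := Real.rpow_pos_of_pos hFpos _
    set y : ℝ := fnorm mu ^ ((2:ℝ)/3) with hydef
    have hy : 0 < y := Real.rpow_pos_of_pos hFpos _
    have e1 : t * fnorm mu ^ 2 = fnorm mu ^ ((4:ℝ)/3) := by
      rw [htdef, ← Real.rpow_natCast (fnorm mu) 2, ← Real.rpow_add hFpos]; norm_num
    have e2 : t^2 * fnorm mu ^ 2 = y := by
      rw [htdef, hydef, ← Real.rpow_natCast (fnorm mu ^ (-(2:ℝ)/3)) 2,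
        ← Real.rpow_natCast (fnorm mu) 2, ← Real.rpow_mul hF0, ← Real.rpow_add hFpos]
      norm_num
    have e3 : y^2 = fnorm mu ^ ((4:ℝ)/3) := by
      rw [hydef, ← Real.rpow_natCast (fnorm mu ^ ((2:ℝ)/3)) 2, ← Real.rpow_mul hF0]
      norm_num
    -- norm of the witness
    have hsum : (∑ i, ∑ j, ((fun i j => mu i j * t) i j)^2) = t^2 * ∑ i, ∑ j, (mu i j)^2 := by
      simp only [Fin.sum_univ_three]; ring
    have hnA : fnorm (fun i j => mu i j * t) = t * fnorm mu := by
      rw [fnorm, hsum, ← hF2]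
      rw [show t^2 * fnorm mu ^2 = (t * fnorm mu)^2 by ring]
      exact Real.sqrt_sq (by positivity)
    have e4 : fnorm (fun i j => mu i j * t) ^ 4 = y^2 := by
      rw [hnA, show (t * fnorm mu)^4 = (t^2 * fnorm mu ^2)^2 by ring, e2]
    have d1 : dotM (fun i j => mu i j * t) mu = t * ∑ i, ∑ j, (mu i j)^2 := by
      simp only [dotM, Fin.sum_univ_three]; ring
    have k1 : dotM (fun i j => mu i j * t) mu = y^2 := by
      rw [d1, ← hF2, e1, ← e3]
    have d2 : dotM lam (Tmap (fun i j => mu i j * t)) = t^2 * dotM lam (Tmap mu) := by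
      simp only [dotM, Tmap_smul, Fin.sum_univ_three]; ring
    have hDT := dot_T_lower lam mu
    have k3 : -(2 * fnorm lam * y) ≤ dotM lam (Tmap (fun i j => mu i j * t)) := by
      rw [d2]
      have := mul_le_mul_of_nonneg_left hDT (le_of_lt (by positivity : (0:ℝ) < t^2))
      calc -(2 * fnorm lam * y) = t^2 * -(2 * fnorm lam * (∑ i, ∑ j, (mu i j)^2)) := by
            rw [← hF2]; nlinarith [e2]
        _ ≤ t^2 * dotM lam (Tmap mu) := this
    have k4 : H (fun i j => mu i j * t) ≤ (1/8) * y^2 := by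
      have := hH1 (fun i j => mu i j * t); rw [e4] at this; exact this
    rw [← e3, k1]
    nlinarith [k3, k4, mul_le_mul_of_nonneg_right hsmall hy.le,
      mul_le_mul hsmall hsmall hL0 (by positivity), sq_nonneg y]

theorem stmt14 (H : M33 → ℝ)
    (hH0 : ∀ A, 0 ≤ H A) (hH1 : ∀ A, H A ≤ (1 / 8) * fnorm A ^ 4)
    (lam mu : M33)
    (hsmall : fnorm lam ≤ (3 / 8) * fnorm mu ^ ((2 : ℝ) / 3)) :
    (((1 / 16) * (fnorm mu ^ ((4 : ℝ) / 3) + fnorm lam ^ 2) : ℝ) : EReal) ≤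
      gH H lam mu ∧
    -- the witness `A = μ |μ|^{−2/3}` (which is `0` when `μ = 0`) realizes the bound
    (1 / 16) * (fnorm mu ^ ((4 : ℝ) / 3) + fnorm lam ^ 2) ≤
      dotM (fun i j => mu i j * fnorm mu ^ (-(2 : ℝ) / 3)) mu
        + dotM lam (Tmap (fun i j => mu i j * fnorm mu ^ (-(2 : ℝ) / 3)))
        - H (fun i j => mu i j * fnorm mu ^ (-(2 : ℝ) / 3)) := by
  have main := witness_bound lam mu hsmall H hH1
  refine ⟨?_, main⟩
  have h := le_iSup (fun A : M33 => ((dotM A mu + dotM lam (Tmap A) - H A : ℝ) : EReal))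
    (fun i j => mu i j * fnorm mu ^ (-(2 : ℝ) / 3))
  unfold gH
  exact le_trans (EReal.coe_le_coe_iff.mpr main) h
end
end

section
/- Let α > 2, α' = α/(α−1), β = α/(α−2), and ℓ > 0. Then there exists a constant C > 0, depending only on α and ℓ, with the following property: if A, λ, μ ∈ ℝ^{3×3} satisfy the first-order optimality condition 0 = μ_{ij} + λ_{Zp} ε_{pjr} ε_{ZiC} A_{Cr} + λ_{Zp} ε_{pqj} ε_{ZBi} A_{Bq} − α ℓ |A|^{α−2} A_{ij} for all i, j ∈ {1,2,3} (summation over repeated indices), then |A|^α ≤ C ( |μ|^{α'} + |λ|^β ). -/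
open scoped BigOperators

noncomputable section

lemma eps_abs_le (i j k : Fin 3) : |eps i j k| ≤ 1 := by
  fin_cases i <;> fin_cases j <;> fin_cases k <;> norm_num [eps]

lemma fnorm_nonneg (A : M33) : 0 ≤ fnorm A := Real.sqrt_nonneg _

lemma abs_entry_le (A : M33) (i j : Fin 3) : |A i j| ≤ fnorm A := by
  rw [← Real.sqrt_sq_eq_abs]
  apply Real.sqrt_le_sqrt
  have h1 : ∀ k : Fin 3, (A i k)^2 ≤ ∑ l, (A i l)^2 := by
    intro k
    exact Finset.single_le_sum (f := fun l => (A i l)^2) (fun l _ => sq_nonneg _) (Finset.mem_univ k)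
  calc (A i j)^2 ≤ ∑ l, (A i l)^2 := h1 j
    _ ≤ ∑ k, ∑ l, (A k l)^2 := Finset.single_le_sum (f := fun k => ∑ l, (A k l)^2)
        (fun k _ => Finset.sum_nonneg fun l _ => sq_nonneg _) (Finset.mem_univ i)

lemma fnorm_sq (A : M33) : fnorm A ^ 2 = ∑ i, ∑ j, (A i j)^2 := by
  exact Real.sq_sqrt (Finset.sum_nonneg fun i _ => Finset.sum_nonneg fun j _ => sq_nonneg _)

lemma abs_sum3_le {f : Fin 3 → ℝ} {K : ℝ} (h : ∀ x, |f x| ≤ K) : |∑ x, f x| ≤ 3 * K := by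
  calc |∑ x, f x| ≤ ∑ x, |f x| := Finset.abs_sum_le_sum_abs _ _
    _ ≤ ∑ _x : Fin 3, K := Finset.sum_le_sum (fun x _ => h x)
    _ = 3 * K := by simp [Finset.sum_const]

lemma abs_sum4_le {g : Fin 3 → Fin 3 → Fin 3 → Fin 3 → ℝ} {K : ℝ}
    (h : ∀ a b c d, |g a b c d| ≤ K) :
    |∑ a, ∑ b, ∑ c, ∑ d, g a b c d| ≤ 81 * K := by
  have h3 : ∀ a b c, |∑ d, g a b c d| ≤ 3 * K := fun a b c => abs_sum3_le (h a b c)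
  have h2 : ∀ a b, |∑ c, ∑ d, g a b c d| ≤ 9 * K := by
    intro a b; have := abs_sum3_le (h3 a b); linarith
  have h1 : ∀ a, |∑ b, ∑ c, ∑ d, g a b c d| ≤ 27 * K := by
    intro a; have := abs_sum3_le (h2 a); linarith
  have := abs_sum3_le h1; linarith

lemma term_bound (lam A : M33) (Z p x y z u v w c r : Fin 3) :
    |lam Z p * eps x y z * eps u v w * A c r| ≤ fnorm lam * fnorm A := by
  have h1 := abs_entry_le lam Z p
  have h2 := eps_abs_le x y z
  have h3 := eps_abs_le u v w
  have h4 := abs_entry_le A c r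
  calc |lam Z p * eps x y z * eps u v w * A c r|
      = |lam Z p| * |eps x y z| * |eps u v w| * |A c r| := by
        rw [abs_mul, abs_mul, abs_mul]
    _ ≤ fnorm lam * 1 * 1 * fnorm A := by
        gcongr <;> first | positivity | simp [fnorm_nonneg, mul_nonneg, fnorm_nonneg lam]
    _ = fnorm lam * fnorm A := by ring

lemma contraction (s : ℝ) (A lam mu : M33)
    (h : ∀ i j : Fin 3, 0 = mu i j
          + (∑ Z, ∑ p, ∑ r, ∑ c, lam Z p * eps p j r * eps Z i c * A c r)
          + (∑ Z, ∑ p, ∑ q, ∑ b, lam Z p * eps p q j * eps Z b i * A b q)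
          - s * A i j) :
    s * fnorm A ^ 2 ≤ 9 * fnorm mu * fnorm A + 1458 * fnorm lam * fnorm A ^ 2 := by
  have ht : 0 ≤ fnorm A := fnorm_nonneg A
  have ha : 0 ≤ fnorm mu := fnorm_nonneg mu
  have hb : 0 ≤ fnorm lam := fnorm_nonneg lam
  have hbound : ∀ i j : Fin 3, s * A i j * A i j
      ≤ (fnorm mu + 162 * (fnorm lam * fnorm A)) * fnorm A := by
    intro i j
    set S1 := ∑ Z, ∑ p, ∑ r, ∑ c, lam Z p * eps p j r * eps Z i c * A c r with hS1
    set S2 := ∑ Z, ∑ p, ∑ q, ∑ b, lam Z p * eps p q j * eps Z b i * A b q with hS2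
    have e : s * A i j = mu i j + S1 + S2 := by have := h i j; linarith
    have b1 : |S1| ≤ 81 * (fnorm lam * fnorm A) :=
      abs_sum4_le (fun Z p r c => term_bound lam A Z p p j r Z i c c r)
    have b2 : |S2| ≤ 81 * (fnorm lam * fnorm A) :=
      abs_sum4_le (fun Z p q b => term_bound lam A Z p p q j Z b i b q)
    have hsum : |mu i j + S1 + S2| ≤ fnorm mu + 162 * (fnorm lam * fnorm A) := by
      have h0 := abs_entry_le mu i j
      calc |mu i j + S1 + S2| ≤ |mu i j + S1| + |S2| := abs_add_le _ _
        _ ≤ |mu i j| + |S1| + |S2| := by have := abs_add_le (mu i j) S1; linarith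
        _ ≤ fnorm mu + 162 * (fnorm lam * fnorm A) := by linarith
    calc s * A i j * A i j = (mu i j + S1 + S2) * A i j := by rw [e]
      _ ≤ |(mu i j + S1 + S2) * A i j| := le_abs_self _
      _ = |mu i j + S1 + S2| * |A i j| := abs_mul _ _
      _ ≤ (fnorm mu + 162 * (fnorm lam * fnorm A)) * fnorm A := by
          apply mul_le_mul hsum (abs_entry_le A i j) (abs_nonneg _)
          nlinarith [mul_nonneg hb ht]
  calc s * fnorm A ^ 2 = ∑ i, ∑ j, s * A i j * A i j := by
        rw [fnorm_sq, Finset.mul_sum]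
        refine Finset.sum_congr rfl fun i _ => ?_
        rw [Finset.mul_sum]
        exact Finset.sum_congr rfl fun j _ => by ring
    _ ≤ ∑ _i : Fin 3, ∑ _j : Fin 3, (fnorm mu + 162 * (fnorm lam * fnorm A)) * fnorm A :=
        Finset.sum_le_sum fun i _ => Finset.sum_le_sum fun j _ => hbound i j
    _ = 9 * ((fnorm mu + 162 * (fnorm lam * fnorm A)) * fnorm A) := by
        simp [Finset.sum_const]; ring
    _ = 9 * fnorm mu * fnorm A + 1458 * fnorm lam * fnorm A ^ 2 := by ring

lemma key_scalar (α e L K t : ℝ) (hα : 0 < α) (he : 0 < α - e) (hL : 0 < L) (ht : 0 < t)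
    (h : L * t ^ α ≤ K * t ^ e) : t ^ α ≤ (K / L) ^ (α / (α - e)) := by
  have h1 : t ^ (α - e) ≤ K / L := by
    have e1 : t ^ α = t ^ (α - e) * t ^ e := by
      rw [← Real.rpow_add ht]; ring_nf
    rw [e1] at h
    have hte : 0 < t ^ e := Real.rpow_pos_of_pos ht e
    have h2 : L * t ^ (α - e) ≤ K := by
      have h' : (L * t ^ (α - e)) * t ^ e ≤ K * t ^ e := by rw [mul_assoc]; exact h
      exact le_of_mul_le_mul_right h' hte
    rw [le_div_iff₀ hL]; linarith
  have e2 : t ^ α = (t ^ (α - e)) ^ (α / (α - e)) := by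
    rw [← Real.rpow_mul ht.le]
    congr 1
    field_simp
  rw [e2]
  exact Real.rpow_le_rpow (Real.rpow_nonneg ht.le _) h1 (div_nonneg hα.le he.le)

theorem stmt15 (α ℓ : ℝ) (hα : 2 < α) (hℓ : 0 < ℓ) :
    ∃ C > 0, ∀ A lam mu : M33,
      (∀ i j : Fin 3,
        0 = mu i j
          + (∑ Z, ∑ p, ∑ r, ∑ c, lam Z p * eps p j r * eps Z i c * A c r)
          + (∑ Z, ∑ p, ∑ q, ∑ b, lam Z p * eps p q j * eps Z b i * A b q)
          - α * ℓ * fnorm A ^ (α - 2) * A i j) →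
      fnorm A ^ α ≤ C * (fnorm mu ^ (α / (α - 1)) + fnorm lam ^ (α / (α - 2))) := by
  have hα0 : 0 < α := by linarith
  have hL : 0 < α * ℓ := mul_pos hα0 hℓ
  set L := α * ℓ with hLdef
  refine ⟨(18 / L) ^ (α / (α - 1)) + (2916 / L) ^ (α / (α - 2)), ?_, ?_⟩
  · have p1 : (0:ℝ) < (18 / L) ^ (α / (α - 1)) :=
      Real.rpow_pos_of_pos (by positivity) _
    have p2 : (0:ℝ) < (2916 / L) ^ (α / (α - 2)) :=
      Real.rpow_pos_of_pos (by positivity) _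
    linarith
  intro A lam mu h
  set t := fnorm A with htdef
  set a := fnorm mu with hadef
  set b := fnorm lam with hbdef
  have ht0 : 0 ≤ t := fnorm_nonneg A
  have ha0 : 0 ≤ a := fnorm_nonneg mu
  have hb0 : 0 ≤ b := fnorm_nonneg lam
  have haα : 0 ≤ a ^ (α / (α - 1)) := Real.rpow_nonneg ha0 _
  have hbα : 0 ≤ b ^ (α / (α - 2)) := Real.rpow_nonneg hb0 _
  have p1 : (0:ℝ) < (18 / L) ^ (α / (α - 1)) := Real.rpow_pos_of_pos (by positivity) _
  have p2 : (0:ℝ) < (2916 / L) ^ (α / (α - 2)) := Real.rpow_pos_of_pos (by positivity) _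
  rcases eq_or_lt_of_le ht0 with htz | htpos
  · rw [← htz, Real.zero_rpow (by linarith)]
    nlinarith
  -- contraction
  have hc := contraction (α * ℓ * t ^ (α - 2)) A lam mu h
  have e1 : t ^ (α - 2) * (t:ℝ) ^ (2:ℕ) = t ^ α := by
    rw [← Real.rpow_natCast t 2, ← Real.rpow_add htpos]
    norm_num
  have main : L * t ^ α ≤ 9 * a * t + 1458 * b * t ^ (2:ℕ) := by
    calc L * t ^ α = α * ℓ * t ^ (α - 2) * (t:ℝ) ^ (2:ℕ) := by rw [← e1]; ring
      _ ≤ 9 * a * t + 1458 * b * t ^ (2:ℕ) := hc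
  have ht2 : (t:ℝ) ^ (2:ℕ) = t ^ (2:ℝ) := (Real.rpow_natCast t 2).symm
  have ht1 : t = t ^ (1:ℝ) := (Real.rpow_one t).symm
  by_cases hcase : 1458 * b * t ^ (2:ℕ) ≤ 9 * a * t
  · -- mu-dominated case
    have h1 : L * t ^ α ≤ (18 * a) * t ^ (1:ℝ) := by
      rw [Real.rpow_one]; linarith
    have h2 := key_scalar α 1 L (18 * a) t hα0 (by linarith) hL htpos h1
    have e3 : (18 * a / L) ^ (α / (α - 1)) = (18 / L) ^ (α / (α - 1)) * a ^ (α / (α - 1)) := by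
      rw [← Real.mul_rpow (by positivity) ha0]
      congr 1
      ring
    rw [e3] at h2
    nlinarith [mul_nonneg p2.le hbα, mul_nonneg p1.le hbα, mul_nonneg p2.le haα]
  · -- lam-dominated case
    push_neg at hcase
    have h1 : L * t ^ α ≤ (2916 * b) * t ^ (2:ℝ) := by
      rw [← ht2]; linarith
    have h2 := key_scalar α 2 L (2916 * b) t hα0 (by linarith) hL htpos h1
    have e3 : (2916 * b / L) ^ (α / (α - 2)) = (2916 / L) ^ (α / (α - 2)) * b ^ (α / (α - 2)) := by
      rw [← Real.mul_rpow (by positivity) hb0]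
      congr 1
      ring
    rw [e3] at h2
    nlinarith [mul_nonneg p1.le haα, mul_nonneg p2.le haα, mul_nonneg p1.le hbα]
end
end
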